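/- arXiv:2604.09899 — 2 statements merged into one kernel-verified Lean document; each statement's English description precedes it below -/
import Mathlib

section
/- Let 0 < a < 1 and for j ∈ {1,2} let S_j ∈ (0,1) and T_j > 0 with S_1 ≤ S_2 and T_1 ≠ T_2, and define f_j(p) = (S_j·log p + (1−S_j)·log(1−p)) / (T_j·log a) for p ∈ (0,1). Then the equation f_1(p) = f_2(p) has at most two solutions p ∈ (0,1). -/
theorem stmt1 (a S₁ S₂ T₁ T₂ : ℝ) (ha : 0 < a) (ha1 : a < 1)
    (hS₁ : S₁ ∈ Set.Ioo (0:ℝ) 1) (hS₂ : S₂ ∈ Set.Ioo (0:ℝ) 1) (hS : S₁ ≤ S₂)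
    (hT₁ : 0 < T₁) (hT₂ : 0 < T₂) (hT : T₁ ≠ T₂) (f₁ f₂ : ℝ → ℝ)
    (hf₁ : ∀ p, f₁ p = (S₁ * Real.log p + (1 - S₁) * Real.log (1 - p)) / (T₁ * Real.log a))
    (hf₂ : ∀ p, f₂ p = (S₂ * Real.log p + (1 - S₂) * Real.log (1 - p)) / (T₂ * Real.log a)) :
    ∃ x y : ℝ, ∀ p ∈ Set.Ioo (0:ℝ) 1, f₁ p = f₂ p → p = x ∨ p = y := by
  set A : ℝ := T₂ * S₁ - T₁ * S₂ with hA
  set B : ℝ := T₂ * (1 - S₁) - T₁ * (1 - S₂) with hB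
  set c : ℝ := T₂ - T₁ with hc
  have hcne : c ≠ 0 := sub_ne_zero.mpr (Ne.symm hT)
  have hcb : A + B = c := by rw [hA, hB, hc]; ring
  set t : ℝ := A / c with ht
  have htc : c * t = A := by rw [ht]; field_simp
  set g : ℝ → ℝ := fun p => A * Real.log p + B * Real.log (1 - p) with hg
  have hla : Real.log a < 0 := Real.log_neg ha ha1
  have hlane : Real.log a ≠ 0 := ne_of_lt hla
  -- roots of f₁ = f₂ are roots of g
  have hroot : ∀ p ∈ Set.Ioo (0:ℝ) 1, f₁ p = f₂ p → g p = 0 := by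
    intro p hp heq
    rw [hf₁, hf₂] at heq
    have h1 : T₁ * Real.log a ≠ 0 := mul_ne_zero (ne_of_gt hT₁) hlane
    have h2 : T₂ * Real.log a ≠ 0 := mul_ne_zero (ne_of_gt hT₂) hlane
    have h3 := (div_eq_div_iff h1 h2).mp heq
    have h4 : ((S₁ * Real.log p + (1 - S₁) * Real.log (1 - p)) * T₂) * Real.log a
        = ((S₂ * Real.log p + (1 - S₂) * Real.log (1 - p)) * T₁) * Real.log a := by
      linarith [h3, (by ring :
        (S₁ * Real.log p + (1 - S₁) * Real.log (1 - p)) * (T₂ * Real.log a)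
        = ((S₁ * Real.log p + (1 - S₁) * Real.log (1 - p)) * T₂) * Real.log a),
        (by ring :
        (S₂ * Real.log p + (1 - S₂) * Real.log (1 - p)) * (T₁ * Real.log a)
        = ((S₂ * Real.log p + (1 - S₂) * Real.log (1 - p)) * T₁) * Real.log a)]
    have h5 := mul_right_cancel₀ hlane h4
    have : g p = (S₁ * Real.log p + (1 - S₁) * Real.log (1 - p)) * T₂
        - (S₂ * Real.log p + (1 - S₂) * Real.log (1 - p)) * T₁ := by
      rw [hg, hA, hB]; ring
    rw [this, h5]; ring
  -- derivative of g
  have hderiv : ∀ p ∈ Set.Ioo (0:ℝ) 1, HasDerivAt g ((A - c * p) / (p * (1 - p))) p := by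
    intro p hp
    have hp0 : p ≠ 0 := ne_of_gt hp.1
    have hp1 : (1:ℝ) - p ≠ 0 := by have := hp.2; intro h; linarith [sub_eq_zero.mp h]
    have hp1' : (0:ℝ) < 1 - p := by have := hp.2; linarith
    have d1 : HasDerivAt (fun q : ℝ => A * Real.log q) (A * p⁻¹) p :=
      (Real.hasDerivAt_log hp0).const_mul A
    have d2 : HasDerivAt (fun q : ℝ => (1:ℝ) - q) (-1) p := by
      simpa using (hasDerivAt_id p).const_sub 1
    have d3 : HasDerivAt (fun q : ℝ => Real.log (1 - q)) ((1 - p)⁻¹ * (-1)) p :=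
      (Real.hasDerivAt_log hp1).comp p d2
    have d4 : HasDerivAt g (A * p⁻¹ + B * ((1 - p)⁻¹ * (-1))) p := d1.add (d3.const_mul B)
    convert d4 using 1
    rw [← hcb]
    field_simp
    ring
  set D₁ : Set ℝ := Set.Ioo 0 1 ∩ Set.Iic t with hD₁
  set D₂ : Set ℝ := Set.Ioo 0 1 ∩ Set.Ici t with hD₂
  have hcont₁ : ContinuousOn g D₁ := fun p hp =>
    (hderiv p hp.1).continuousAt.continuousWithinAt
  have hcont₂ : ContinuousOn g D₂ := fun p hp =>
    (hderiv p hp.1).continuousAt.continuousWithinAt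
  have hconv₁ : Convex ℝ D₁ := (convex_Ioo 0 1).inter (convex_Iic t)
  have hconv₂ : Convex ℝ D₂ := (convex_Ioo 0 1).inter (convex_Ici t)
  have hint₁ : interior D₁ = Set.Ioo 0 1 ∩ Set.Iio t := by
    rw [hD₁, interior_inter, interior_Iic, isOpen_Ioo.interior_eq]
  have hint₂ : interior D₂ = Set.Ioo 0 1 ∩ Set.Ioi t := by
    rw [hD₂, interior_inter, interior_Ici, isOpen_Ioo.interior_eq]
  have hden : ∀ p ∈ Set.Ioo (0:ℝ) 1, 0 < p * (1 - p) := by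
    intro p hp; have := hp.1; have := hp.2; nlinarith
  have inj₁ : Set.InjOn g D₁ := by
    rcases lt_or_gt_of_ne hcne with hneg | hpos
    · refine (strictAntiOn_of_deriv_neg hconv₁ hcont₁ ?_).injOn
      intro x hx
      rw [hint₁] at hx
      rw [(hderiv x hx.1).deriv]
      apply div_neg_of_neg_of_pos _ (hden x hx.1)
      have : c * t < c * x := (mul_lt_mul_left_of_neg hneg).mpr hx.2
      linarith [htc]
    · refine (strictMonoOn_of_deriv_pos hconv₁ hcont₁ ?_).injOn
      intro x hx
      rw [hint₁] at hx
      rw [(hderiv x hx.1).deriv]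
      apply div_pos _ (hden x hx.1)
      have : c * x < c * t := (mul_lt_mul_iff_right₀ hpos).mpr hx.2
      linarith [htc]
  have inj₂ : Set.InjOn g D₂ := by
    rcases lt_or_gt_of_ne hcne with hneg | hpos
    · refine (strictMonoOn_of_deriv_pos hconv₂ hcont₂ ?_).injOn
      intro x hx
      rw [hint₂] at hx
      rw [(hderiv x hx.1).deriv]
      apply div_pos _ (hden x hx.1)
      have : c * x < c * t := (mul_lt_mul_left_of_neg hneg).mpr hx.2
      linarith [htc]
    · refine (strictAntiOn_of_deriv_neg hconv₂ hcont₂ ?_).injOn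
      intro x hx
      rw [hint₂] at hx
      rw [(hderiv x hx.1).deriv]
      apply div_neg_of_neg_of_pos _ (hden x hx.1)
      have : c * t < c * x := (mul_lt_mul_iff_right₀ hpos).mpr hx.2
      linarith [htc]
  by_cases h1 : ∃ q, q ∈ D₁ ∧ g q = 0
  · obtain ⟨x, hx, hgx⟩ := h1
    by_cases h2 : ∃ q, q ∈ D₂ ∧ g q = 0
    · obtain ⟨y, hy, hgy⟩ := h2
      refine ⟨x, y, fun p hp heq => ?_⟩
      have hgp := hroot p hp heq
      rcases le_or_gt p t with hpt | hpt
      · exact Or.inl (inj₁ ⟨hp, hpt⟩ hx (hgp.trans hgx.symm))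
      · exact Or.inr (inj₂ ⟨hp, hpt.le⟩ hy (hgp.trans hgy.symm))
    · refine ⟨x, x, fun p hp heq => ?_⟩
      have hgp := hroot p hp heq
      rcases le_or_gt p t with hpt | hpt
      · exact Or.inl (inj₁ ⟨hp, hpt⟩ hx (hgp.trans hgx.symm))
      · exact absurd ⟨p, ⟨hp, hpt.le⟩, hgp⟩ h2
  · by_cases h2 : ∃ q, q ∈ D₂ ∧ g q = 0
    · obtain ⟨y, hy, hgy⟩ := h2
      refine ⟨y, y, fun p hp heq => ?_⟩
      have hgp := hroot p hp heq
      rcases le_or_gt p t with hpt | hpt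
      · exact absurd ⟨p, ⟨hp, hpt⟩, hgp⟩ h1
      · exact Or.inl (inj₂ ⟨hp, hpt.le⟩ hy (hgp.trans hgy.symm))
    · refine ⟨0, 0, fun p hp heq => ?_⟩
      have hgp := hroot p hp heq
      rcases le_or_gt p t with hpt | hpt
      · exact absurd ⟨p, ⟨hp, hpt⟩, hgp⟩ h1
      · exact absurd ⟨p, ⟨hp, hpt.le⟩, hgp⟩ h2
end

section
/- Let K ≥ 2, 0 < A ≤ B < 1, a : Fin K → ℝ with A ≤ a(i) ≤ B for all i, and let D ≥ 0 satisfy ∑_i a(i)^D = 1. Let p be a probability vector with 0 < p(i) < 1, and let m' be an index minimizing a(i)^D/p(i). Then log p(m') / log a(m') ≤ D. -/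
theorem stmt6 (K : ℕ) (hK : 2 ≤ K) (A B : ℝ) (hA : 0 < A) (hAB : A ≤ B) (hB : B < 1)
    (a p : Fin K → ℝ) (ha : ∀ i, A ≤ a i ∧ a i ≤ B)
    (D : ℝ) (hD : 0 ≤ D) (hDsum : ∑ i, a i ^ D = 1)
    (hp : ∀ i, 0 < p i ∧ p i < 1) (hps : ∑ i, p i = 1)
    (m' : Fin K) (hm' : ∀ i, a m' ^ D / p m' ≤ a i ^ D / p i) :
    Real.log (p m') / Real.log (a m') ≤ D := by
  have ham : 0 < a m' := lt_of_lt_of_le hA (ha m').1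
  have ham1 : a m' < 1 := lt_of_le_of_lt (ha m').2 hB
  have hpm : 0 < p m' := (hp m').1
  -- key: a m' ^ D ≤ p m'
  have hkey : a m' ^ D ≤ p m' := by
    set r := a m' ^ D / p m' with hr
    have hsum : r * 1 ≤ 1 := by
      calc r * 1 = ∑ i, r * p i := by rw [← Finset.mul_sum, hps]
        _ ≤ ∑ i, a i ^ D := by
            apply Finset.sum_le_sum
            intro i _
            have := hm' i
            have hpi := (hp i).1
            rw [hr, div_mul_eq_mul_div, div_le_iff₀ hpm]
            rw [div_le_div_iff₀ (by positivity) hpi] at this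
            linarith
        _ = 1 := hDsum
    rw [mul_one, hr, div_le_one hpm] at hsum
    exact hsum
  have hlog : D * Real.log (a m') ≤ Real.log (p m') := by
    have := Real.log_le_log (by positivity) hkey
    rwa [Real.log_rpow ham] at this
  have hlam : Real.log (a m') < 0 := Real.log_neg ham ham1
  rw [div_le_iff_of_neg hlam]
  linarith
end
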